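/- arXiv:1306.6015 — 2 statements merged into one kernel-verified Lean document; each statement's English description precedes it below -/
import Mathlib

section
/- For all real numbers (or integers) α, β, γ and any nonnegative integer n, the Hagen–Rothe identity holds: the sum over i from 0 to n of (γ/(γ+βi)) · C(γ+βi, i) · C(α+β(n−i), n−i) equals C(α+γ+βn, n), provided γ+βi ≠ 0 for 0 ≤ i ≤ n so all terms are defined. -/
open Finset Polynomial

lemma desc_eval (x : ℚ) (k : ℕ) :
    (descPochhammer ℚ k).eval x = (k.factorial : ℚ) * Ring.choose x k := by
  have h1 := Ring.descPochhammer_eq_factorial_smul_choose (R := ℚ) x k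
  have h2 : (descPochhammer ℤ k).smeval x = (descPochhammer ℚ k).eval x := by
    rw [← Polynomial.eval₂_smulOneHom_eq_smeval,
      show (RingHom.smulOneHom : ℤ →+* ℚ) = Int.castRingHom ℚ from Subsingleton.elim _ _,
      Polynomial.eval₂_eq_eval_map, descPochhammer_map]
  rw [← h2, h1, nsmul_eq_mul]

lemma rchoose_eq (x : ℚ) (k : ℕ) :
    Ring.choose x k = (descPochhammer ℚ k).eval x / (k.factorial : ℚ) := by
  rw [desc_eval]
  field_simp

lemma succ_mul_choose (x : ℚ) (k : ℕ) :
    ((k : ℚ) + 1) * Ring.choose x (k + 1) = x * Ring.choose (x - 1) k := by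
  have h1 : (descPochhammer ℚ (k+1)).eval x = x * (descPochhammer ℚ k).eval (x - 1) := by
    rw [descPochhammer_succ_left]
    simp [eval_comp]
  rw [desc_eval, desc_eval] at h1
  have hf : (k.factorial : ℚ) ≠ 0 := Nat.cast_ne_zero.mpr k.factorial_ne_zero
  have : ((k+1).factorial : ℚ) = ((k:ℚ)+1) * k.factorial := by
    rw [Nat.factorial_succ]; push_cast; ring
  rw [this] at h1
  apply mul_left_cancel₀ hf
  linear_combination h1

lemma pascal (r : ℚ) (k : ℕ) :
    Ring.choose r (k+1) = Ring.choose (r-1) k + Ring.choose (r-1) (k+1) := by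
  have := Ring.choose_succ_succ (r-1) k
  rwa [sub_add_cancel] at this

noncomputable def A (β γ : ℚ) : ℕ → ℚ
  | 0 => 1
  | j+1 => Ring.choose (γ + β * ((j:ℚ)+1)) (j+1)
      - β * Ring.choose (γ + (β * ((j:ℚ)+1) - 1)) j

noncomputable def S (β α γ : ℚ) (n : ℕ) : ℚ :=
  ∑ i ∈ range (n+1), A β γ i * Ring.choose (α + β * ((n - i : ℕ) : ℚ)) (n - i)

noncomputable def E (β γ α : ℚ) (n : ℕ) : ℚ :=
  ∑ i ∈ range (n+1),
    Ring.choose (γ + β * (i : ℚ)) i * Ring.choose (α + β * ((n - i : ℕ) : ℚ)) (n - i)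

lemma sum_succ' (n : ℕ) (f : ℕ → ℚ) :
    ∑ i ∈ range (n+2), f i = (∑ j ∈ range (n+1), f (j+1)) + f 0 :=
  Finset.sum_range_succ' f (n+1)

lemma S_eq (β α γ : ℚ) (n : ℕ) :
    S β α γ (n+1) = E β γ α (n+1) - β * E β (γ+β-1) α n := by
  unfold S E
  rw [sum_succ', sum_succ', Finset.mul_sum, add_sub_right_comm, ← Finset.sum_sub_distrib]
  have h0 : A β γ 0 = Ring.choose (γ + β * ((0:ℕ):ℚ)) 0 := by
    simp [A, Ring.choose_zero_right]
  rw [h0]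
  congr 1
  refine Finset.sum_congr rfl ?_
  intro j hj
  simp only [A, Nat.succ_sub_succ]
  have e1 : γ + (β * ((j:ℚ)+1) - 1) = (γ+β-1) + β * (j:ℚ) := by ring
  push_cast
  rw [e1]
  ring

lemma E_pascal (β γ α : ℚ) (n : ℕ) :
    E β γ α (n+1) = E β (γ-1) α (n+1) + E β (γ+β-1) α n := by
  unfold E
  rw [sum_succ', sum_succ', add_right_comm, ← Finset.sum_add_distrib]
  have h0 : Ring.choose (γ + β * ((0:ℕ):ℚ)) 0 = Ring.choose ((γ-1) + β * ((0:ℕ):ℚ)) 0 := by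
    simp [Ring.choose_zero_right]
  rw [h0]
  congr 1
  refine Finset.sum_congr rfl ?_
  intro j hj
  simp only [Nat.succ_sub_succ]
  have hp := pascal (γ + β * ((j:ℚ)+1)) j
  have e1 : γ + β * ((j:ℚ)+1) - 1 = (γ-1) + β * ((j:ℚ)+1) := by ring
  have e2 : γ + β * ((j:ℚ)+1) - 1 = (γ+β-1) + β * (j:ℚ) := by ring
  push_cast
  rw [hp, e1]
  nth_rw 2 [← e1]
  rw [e2]
  ring

noncomputable def CP (a : ℚ) (k : ℕ) : ℚ[X] :=
  Polynomial.C ((k.factorial : ℚ)⁻¹) * (descPochhammer ℚ k).comp (X + Polynomial.C a)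

lemma CP_eval (a γ : ℚ) (k : ℕ) : (CP a k).eval γ = Ring.choose (γ + a) k := by
  unfold CP
  rw [eval_mul, eval_C, eval_comp, eval_add, eval_X, eval_C, rchoose_eq, inv_mul_eq_div]

noncomputable def Apoly (β : ℚ) : ℕ → ℚ[X]
  | 0 => 1
  | j+1 => CP (β * ((j:ℚ)+1)) (j+1) - Polynomial.C β * CP (β * ((j:ℚ)+1) - 1) j

lemma Apoly_eval (β γ : ℚ) (i : ℕ) : (Apoly β i).eval γ = A β γ i := by
  cases i with
  | zero => simp [Apoly, A]
  | succ j =>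
    simp only [Apoly, A, eval_sub, eval_mul, eval_C, CP_eval]

noncomputable def Spoly (β α : ℚ) (n : ℕ) : ℚ[X] :=
  ∑ i ∈ range (n+1), Apoly β i * Polynomial.C (Ring.choose (α + β * ((n - i : ℕ) : ℚ)) (n - i))

lemma Spoly_eval (β α γ : ℚ) (n : ℕ) : (Spoly β α n).eval γ = S β α γ n := by
  unfold Spoly S
  rw [eval_finset_sum]
  exact Finset.sum_congr rfl fun i _ => by rw [eval_mul, eval_C, Apoly_eval]

lemma periodic_zero (D : ℚ → ℚ) (p : ℚ[X]) (hp : ∀ γ, D γ = p.eval γ)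
    (hper : ∀ γ, D γ = D (γ - 1)) (h0 : D 0 = 0) : ∀ γ, D γ = 0 := by
  have hnat : ∀ m : ℕ, D m = 0 := by
    intro m
    induction m with
    | zero => simpa using h0
    | succ k ih =>
      have := hper ((k:ℚ)+1)
      rw [add_sub_cancel_right] at this
      rw [Nat.cast_succ, this, ih]
  have hproots : p = 0 := by
    apply Polynomial.eq_zero_of_infinite_isRoot
    apply Set.infinite_of_injective_forall_mem (f := (Nat.cast : ℕ → ℚ))
    · exact Nat.cast_injective
    · intro m
      simp only [Set.mem_setOf_eq, IsRoot.def, ← hp]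
      exact hnat m
  intro γ
  rw [hp, hproots, eval_zero]

lemma A_gamma_zero (β : ℚ) (j : ℕ) : A β 0 (j+1) = 0 := by
  have hs := succ_mul_choose (β * ((j:ℚ)+1)) j
  have hj : ((j:ℚ)+1) ≠ 0 := by positivity
  have h2 : ((j:ℚ)+1) * Ring.choose (β * ((j:ℚ)+1)) (j+1)
      = ((j:ℚ)+1) * (β * Ring.choose (β * ((j:ℚ)+1) - 1) j) := by linear_combination hs
  have h3 := mul_left_cancel₀ hj h2
  simp only [A, zero_add]
  linear_combination h3

lemma S_gamma_zero (β α : ℚ) (n : ℕ) :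
    S β α 0 n = Ring.choose (α + β * (n : ℚ)) n := by
  unfold S
  rw [Finset.sum_eq_single_of_mem 0 (Finset.mem_range.mpr (Nat.succ_pos n))]
  · simp [A]
  · intro i _ hi
    obtain ⟨j, rfl⟩ := Nat.exists_eq_succ_of_ne_zero hi
    rw [A_gamma_zero, zero_mul]

lemma S_diff (β α γ : ℚ) (n : ℕ) :
    S β α γ (n+1) - S β α (γ-1) (n+1) = S β α (γ+β-1) n := by
  cases n with
  | zero =>
    simp [S, Finset.sum_range_succ, A, Ring.choose_one_right, Ring.choose_zero_right]
  | succ m =>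
    have h1 := S_eq β α γ (m+1)
    have h2 := S_eq β α (γ-1) (m+1)
    have h3 := E_pascal β γ α (m+1)
    have h4 := E_pascal β (γ+β-1) α m
    have h5 := S_eq β α (γ+β-1) m
    rw [show γ - 1 + β - 1 = γ + β - 1 - 1 by ring] at h2
    linear_combination h1 - h2 - h5 + h3 - β * h4

lemma main (β : ℚ) : ∀ n : ℕ, ∀ α γ : ℚ, S β α γ n = Ring.choose (α + γ + β * (n:ℚ)) n := by
  intro n
  induction n with
  | zero =>
    intro α γ
    simp [S, A, Ring.choose_zero_right]
  | succ n ih =>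
    intro α γ
    have hp : ∀ g : ℚ, S β α g (n+1) - Ring.choose (α + g + β * ((n:ℚ)+1)) (n+1)
        = (Spoly β α (n+1) - CP (α + β * ((n:ℚ)+1)) (n+1)).eval g := by
      intro g
      rw [eval_sub, Spoly_eval, CP_eval,
        show g + (α + β * ((n:ℚ)+1)) = α + g + β * ((n:ℚ)+1) by ring]
    have hper : ∀ g : ℚ, (fun g => S β α g (n+1) - Ring.choose (α + g + β * ((n:ℚ)+1)) (n+1)) g
        = (fun g => S β α g (n+1) - Ring.choose (α + g + β * ((n:ℚ)+1)) (n+1)) (g - 1) := by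
      intro g
      simp only []
      have hd := S_diff β α g n
      have hpasc := pascal (α + g + β * ((n:ℚ)+1)) n
      have hih := ih α (g + β - 1)
      rw [show α + (g + β - 1) + β * (n:ℚ) = α + g + β * ((n:ℚ)+1) - 1 by ring] at hih
      rw [show α + (g - 1) + β * ((n:ℚ)+1) = α + g + β * ((n:ℚ)+1) - 1 by ring]
      linear_combination hd - hpasc + hih
    have h0 : (fun g => S β α g (n+1) - Ring.choose (α + g + β * ((n:ℚ)+1)) (n+1)) 0 = 0 := by
      simp only []
      rw [S_gamma_zero, show α + (0:ℚ) + β * ((n:ℚ)+1) = α + β * ((n:ℚ)+1) by ring]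
      push_cast
      ring
    have hz := periodic_zero _ _ hp hper h0 γ
    push_cast
    linarith [hz]

theorem stmt16 (α β γ : ℚ) (n : ℕ) (h : ∀ i ≤ n, γ + β * i ≠ 0) :
    ∑ i ∈ Finset.range (n + 1),
        γ / (γ + β * i) * Ring.choose (γ + β * i) i * Ring.choose (α + β * (n - i : ℕ)) (n - i) =
      Ring.choose (α + γ + β * n) n := by
  rw [← main β n α γ]
  unfold S
  apply Finset.sum_congr rfl
  intro i hi
  have hiℕ : i ≤ n := Nat.lt_succ_iff.mp (Finset.mem_range.mp hi)
  have hne := h i hiℕ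
  congr 1
  cases i with
  | zero =>
    simp only [Nat.cast_zero, mul_zero, add_zero] at hne ⊢
    simp [A, Ring.choose_zero_right, div_self hne]
  | succ j =>
    have hs := succ_mul_choose (γ + β * ((j:ℚ)+1)) j
    simp only [A]
    push_cast at hne ⊢
    rw [show γ + (β * ((j:ℚ)+1) - 1) = (γ + β * ((j:ℚ)+1)) - 1 by ring]
    field_simp
    linear_combination (-β) * hs
end

section
/- For positive integers m, n, k, d with n ≥ k(m−d) (so the endpoint lies strictly above the barrier when n > k(m−d)) and n + kd > km, the number of monotone lattice paths from (0,0) to (m,n) staying strictly above the line y = k(x−d) equals C(m+n, m) minus the sum over i from ⌊(kd−1)/(k+1)⌋+1 to m of ((n+kd−km)/(m+n+kd−(k+1)i)) · C(m+n+kd−(k+1)i, m−i) · C((k+1)i−kd, i). -/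
open Finset

/-- A monotone lattice path from `s` to `t` using unit steps `(1,0)` and `(0,1)`. -/
def MonoPath (s t : ℤ × ℤ) (P : List (ℤ × ℤ)) : Prop :=
  P.head? = some s ∧ P.getLast? = some t ∧
  P.Chain' (fun p q => q = (p.1 + 1, p.2) ∨ q = (p.1, p.2 + 1))

/-- Integer binomial coefficient, `0` for negative lower index. -/
def IC (x j : ℤ) : ℕ := if j < 0 then 0 else x.toNat.choose j.toNat

/-- Number of monotone lattice paths from `(a,b)` to `(m,n)` staying weakly above `y = kx - r`. -/
noncomputable def NW (k r a b m n : ℤ) : ℕ :=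
  Set.ncard {P : List (ℤ × ℤ) | MonoPath (a, b) (m, n) P ∧ ∀ p ∈ P, k * p.1 - r ≤ p.2}

/-- Number of monotone lattice paths from `(a,b)` to `(m,n)` staying strictly above `y = kx - r`. -/
noncomputable def NS (k r a b m n : ℤ) : ℕ :=
  Set.ncard {P : List (ℤ × ℤ) | MonoPath (a, b) (m, n) P ∧ ∀ p ∈ P, k * p.1 - r < p.2}

namespace Stmt18

abbrev SRel (p q : ℤ × ℤ) : Prop := q = (p.1 + 1, p.2) ∨ q = (p.1, p.2 + 1)

lemma monoPath_cases {s t : ℤ × ℤ} {P : List (ℤ × ℤ)} (h : MonoPath s t P) :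
    (P = [s] ∧ t = s) ∨ ∃ Q u, P = Q ++ [t] ∧ MonoPath s u Q ∧ SRel u t := by
  obtain ⟨h1, h2, h3⟩ := h
  have hne : P ≠ [] := by rintro rfl; simp at h1
  obtain ⟨Q, a, hP⟩ : ∃ Q a, P = Q ++ [a] :=
    ⟨P.dropLast, P.getLast hne, (List.dropLast_append_getLast hne).symm⟩
  subst hP
  have ha : a = t := by
    rw [List.getLast?_append_of_ne_nil _ (by simp)] at h2
    simpa using h2
  subst ha
  by_cases hQ : Q = []
  · subst hQ
    left
    simp only [List.nil_append, List.head?_cons, Option.some.injEq] at h1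
    subst h1; exact ⟨rfl, rfl⟩
  · right
    have hQlast := List.getLast?_eq_getLast_of_ne_nil hQ
    unfold List.Chain' at h3
    rw [List.isChain_append] at h3
    refine ⟨Q, Q.getLast hQ, rfl, ⟨?_, hQlast, h3.1⟩, ?_⟩
    · rwa [List.head?_append_of_ne_nil _ hQ] at h1
    · exact h3.2.2 _ hQlast _ rfl

lemma monoPath_concat {s u t : ℤ × ℤ} {Q : List (ℤ × ℤ)} (h : MonoPath s u Q) (hst : SRel u t) :
    MonoPath s t (Q ++ [t]) := by
  obtain ⟨h1, h2, h3⟩ := h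
  have hQ : Q ≠ [] := by rintro rfl; simp at h1
  refine ⟨?_, ?_, ?_⟩
  · rwa [List.head?_append_of_ne_nil _ hQ]
  · rw [List.getLast?_append_of_ne_nil _ (by simp)]; rfl
  · unfold List.Chain'
    rw [List.isChain_append]
    refine ⟨h3, List.isChain_singleton _, ?_⟩
    intro x hx y hy
    simp only [List.head?_cons, Option.mem_def, Option.some.injEq] at hy
    rw [h2] at hx
    simp only [Option.mem_def, Option.some.injEq] at hx
    subst hx; subst hy; exact hst

lemma monoPath_le : ∀ (P : List (ℤ × ℤ)) (s t : ℤ × ℤ), MonoPath s t P →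
    s.1 ≤ t.1 ∧ s.2 ≤ t.2 := by
  intro P
  induction P using List.reverseRecOn with
  | nil => intro s t h; exact absurd h.1 (by simp)
  | append_singleton Q a IH =>
    intro s t h
    rcases monoPath_cases h with ⟨hP, rfl⟩ | ⟨Q', u, hP, hQ', hrel⟩
    · exact ⟨le_refl _, le_refl _⟩
    · have ht : a = t := by
        have := congrArg List.getLast? hP
        simpa using this
      have hQ : Q' = Q := by
        subst ht; exact List.append_cancel_right hP.symm
      subst hQ
      have h1 := IH s u hQ'
      rcases hrel with h | h <;> subst h <;> constructor <;> simp <;> omega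



def SetS (k r m n : ℤ) : Set (List (ℤ × ℤ)) :=
  {P | MonoPath (0, 0) (m, n) P ∧ ∀ p ∈ P, k * p.1 - r < p.2}

lemma NS_eq_setS (k r m n : ℤ) : NS k r 0 0 m n = (SetS k r m n).ncard := rfl

lemma end_mem {s t : ℤ × ℤ} {P : List (ℤ × ℤ)} (h : MonoPath s t P) : t ∈ P := by
  obtain ⟨hh, hlast⟩ := List.mem_getLast?_eq_getLast (x := t) (l := P) h.2.1
  exact hlast ▸ List.getLast_mem hh

lemma setS_empty_of_low {k r m n : ℤ} (h : n ≤ k * m - r) : SetS k r m n = ∅ := by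
  ext P
  simp only [SetS, Set.mem_setOf_eq, Set.mem_empty_iff_false, iff_false, not_and]
  intro hp hab
  have := hab _ (end_mem hp)
  simp only at this
  omega

lemma setS_empty_of_neg {k r m n : ℤ} (h : m < 0 ∨ n < 0) : SetS k r m n = ∅ := by
  ext P
  simp only [SetS, Set.mem_setOf_eq, Set.mem_empty_iff_false, iff_false, not_and]
  intro hp _
  have := monoPath_le P _ _ hp
  simp only at this
  omega

lemma setS_zero {k r : ℤ} (hr : 0 < r) : SetS k r 0 0 = {[((0 : ℤ), (0 : ℤ))]} := by
  ext P
  simp only [SetS, Set.mem_setOf_eq, Set.mem_singleton_iff]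
  constructor
  · rintro ⟨hp, -⟩
    rcases monoPath_cases hp with ⟨hP, -⟩ | ⟨Q, u, hP, hQ, hrel⟩
    · exact hP
    · exfalso
      have hle := monoPath_le Q _ _ hQ
      simp only at hle
      rcases hrel with h | h <;> rw [Prod.ext_iff] at h <;> simp at h <;> omega
  · rintro rfl
    refine ⟨⟨rfl, rfl, List.isChain_singleton _⟩, ?_⟩
    intro p hp
    simp only [List.mem_singleton] at hp
    subst hp
    simpa using hr

lemma setS_split {k r m n : ℤ} (h0 : ¬(m = 0 ∧ n = 0)) (hab : k * m - r < n) :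
    SetS k r m n =
      ((· ++ [((m : ℤ), (n : ℤ))]) '' SetS k r (m - 1) n) ∪
      ((· ++ [((m : ℤ), (n : ℤ))]) '' SetS k r m (n - 1)) := by
  ext P
  constructor
  · rintro ⟨hp, habv⟩
    rcases monoPath_cases hp with ⟨hP, heq⟩ | ⟨Q, u, hP, hQ, hrel⟩
    · exfalso; rw [Prod.ext_iff] at heq; simp at heq; exact h0 ⟨heq.1, heq.2⟩
    · have hmem : ∀ p ∈ Q, k * p.1 - r < p.2 := by
        intro p hpQ; exact habv p (hP ▸ List.mem_append_left _ hpQ)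
      rcases hrel with h | h
      · left
        have hu : u = (m - 1, n) := by rw [Prod.ext_iff] at h ⊢; simp at h ⊢; omega
        exact ⟨Q, ⟨hu ▸ hQ, hmem⟩, hP.symm⟩
      · right
        have hu : u = (m, n - 1) := by rw [Prod.ext_iff] at h ⊢; simp at h ⊢; omega
        exact ⟨Q, ⟨hu ▸ hQ, hmem⟩, hP.symm⟩
  · rintro (⟨Q, ⟨hQ, hQab⟩, rfl⟩ | ⟨Q, ⟨hQ, hQab⟩, rfl⟩)
    · refine ⟨monoPath_concat hQ (Or.inl ?_), ?_⟩
      · rw [Prod.ext_iff]; simp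
      · intro p hp
        rcases List.mem_append.mp hp with h | h
        · exact hQab p h
        · simp only [List.mem_singleton] at h; subst h; exact hab
    · refine ⟨monoPath_concat hQ (Or.inr ?_), ?_⟩
      · rw [Prod.ext_iff]; simp
      · intro p hp
        rcases List.mem_append.mp hp with h | h
        · exact hQab p h
        · simp only [List.mem_singleton] at h; subst h; exact hab

/-- recursive path count -/
def f (k r : ℤ) : ℕ → ℕ → ℕ
  | 0, 0 => if 0 < r then 1 else 0
  | m + 1, 0 => if k * (m + 1) - r < 0 then f k r m 0 else 0
  | 0, n + 1 => if -r < (n : ℤ) + 1 then f k r 0 n else 0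
  | m + 1, n + 1 =>
      if k * ((m : ℤ) + 1) - r < (n : ℤ) + 1 then f k r m (n + 1) + f k r (m + 1) n else 0

lemma f_below {k r : ℤ} {m n : ℕ} (h : (n : ℤ) ≤ k * m - r) (h0 : 0 < r) : f k r m n = 0 := by
  rcases m with _ | m <;> rcases n with _ | n <;>
    simp only [f, Nat.cast_zero, Nat.cast_succ] <;>
    rw [if_neg (by push_cast at h ⊢; omega)]

lemma setS_card {k r : ℤ} (hr : 0 < r) :
    ∀ N m n : ℕ, m + n = N →
      (SetS k r m n).Finite ∧ (SetS k r m n).ncard = f k r m n := by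
  intro N
  induction N with
  | zero =>
    intro m n hmn
    obtain ⟨rfl, rfl⟩ : m = 0 ∧ n = 0 := by omega
    rw [show ((0 : ℕ) : ℤ) = 0 from rfl, setS_zero hr]
    refine ⟨Set.finite_singleton _, ?_⟩
    rw [Set.ncard_singleton]
    simp [f, hr]
  | succ N IH =>
    intro m n hmn
    by_cases hab : k * (m : ℤ) - r < n
    · have h0 : ¬((m : ℤ) = 0 ∧ (n : ℤ) = 0) := by push_cast; omega
      have key := setS_split (k := k) (r := r) h0 hab
      rcases m with _ | m
      · -- m = 0, n = N + 1 > 0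
        obtain rfl : n = N + 1 := by omega
        have hneg : SetS k r ((0 : ℕ) - 1 : ℤ) (N + 1 : ℕ) = ∅ :=
          setS_empty_of_neg (Or.inl (by omega))
        rw [key, hneg]
        simp only [Set.image_empty, Set.empty_union]
        have hIH := IH 0 N (by omega)
        have hcast : ((N + 1 : ℕ) : ℤ) - 1 = ((N : ℕ) : ℤ) := by push_cast; ring
        rw [hcast]
        refine ⟨hIH.1.image _, ?_⟩
        rw [Set.ncard_image_of_injective _ (List.append_left_injective _), hIH.2]
        simp only [f]
        rw [if_pos (by push_cast at hab ⊢; omega)]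
      · rcases n with _ | n
        · -- n = 0, m = N
          obtain rfl : m = N := by omega
          have hneg : SetS k r ((m + 1 : ℕ) : ℤ) (((0 : ℕ) : ℤ) - 1) = ∅ :=
            setS_empty_of_neg (Or.inr (by omega))
          rw [key, hneg]
          simp only [Set.image_empty, Set.union_empty]
          have hIH := IH m 0 (by omega)
          have hcast : ((m + 1 : ℕ) : ℤ) - 1 = ((m : ℕ) : ℤ) := by push_cast; ring
          rw [hcast]
          refine ⟨hIH.1.image _, ?_⟩
          rw [Set.ncard_image_of_injective _ (List.append_left_injective _), hIH.2]
          simp only [f]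
          rw [if_pos (by push_cast at hab ⊢; omega)]
        · -- m, n both positive
          have hIH1 := IH m (n + 1) (by omega)
          have hIH2 := IH (m + 1) n (by omega)
          have hc1 : ((m + 1 : ℕ) : ℤ) - 1 = ((m : ℕ) : ℤ) := by push_cast; ring
          have hc2 : ((n + 1 : ℕ) : ℤ) - 1 = ((n : ℕ) : ℤ) := by push_cast; ring
          rw [key, hc1, hc2]
          have hdisj : Disjoint
              ((· ++ [(((m + 1 : ℕ) : ℤ), ((n + 1 : ℕ) : ℤ))]) '' SetS k r (m : ℕ) ((n + 1 : ℕ) : ℤ))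
              ((· ++ [(((m + 1 : ℕ) : ℤ), ((n + 1 : ℕ) : ℤ))]) '' SetS k r ((m + 1 : ℕ) : ℤ) (n : ℕ)) := by
            rw [Set.disjoint_left]
            rintro P ⟨Q1, hQ1, rfl⟩ ⟨Q2, hQ2, hP2⟩
            have hQQ : Q2 = Q1 := List.append_cancel_right hP2
            subst hQQ
            have e1 := hQ1.1.2.1
            have e2 := hQ2.1.2.1
            rw [e1] at e2
            simp only [Option.some.injEq, Prod.ext_iff] at e2
            push_cast at e2
            omega
          refine ⟨(hIH1.1.image _).union (hIH2.1.image _), ?_⟩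
          rw [Set.ncard_union_eq hdisj (hIH1.1.image _) (hIH2.1.image _),
            Set.ncard_image_of_injective _ (List.append_left_injective _),
            Set.ncard_image_of_injective _ (List.append_left_injective _), hIH1.2, hIH2.2]
          simp only [f]
          rw [if_pos (by push_cast at hab ⊢; omega)]
    · rw [setS_empty_of_low (by omega)]
      refine ⟨Set.finite_empty, ?_⟩
      rw [Set.ncard_empty, f_below (by omega) hr]

lemma NS_eq_f {k r m n : ℤ} (hr : 0 < r) (hm : 0 ≤ m) (hn : 0 ≤ n) :
    NS k r 0 0 m n = f k r m.toNat n.toNat := by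
  rw [NS_eq_setS]
  have h1 : m = (m.toNat : ℤ) := (Int.toNat_of_nonneg hm).symm
  have h2 : n = (n.toNat : ℤ) := (Int.toNat_of_nonneg hn).symm
  rw [h1, h2]
  exact (setS_card hr (m.toNat + n.toNat) m.toNat n.toNat rfl).2



/-- ballot-type building block -/
def Bq (k M N : ℤ) : ℚ := ((N - k * M : ℤ) : ℚ) / ((M + N : ℤ) : ℚ) * (IC (M + N) M : ℚ)

lemma IC_coe (x j : ℕ) : IC (x : ℤ) (j : ℤ) = x.choose j := by
  rw [IC, if_neg (by omega)]
  simp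

lemma IC_zero_of_lt {x : ℤ} {j : ℕ} (hj : 1 ≤ j) (h : x < j) : IC x (j : ℤ) = 0 := by
  rw [IC, if_neg (by omega)]
  rw [Int.toNat_natCast]
  exact Nat.choose_eq_zero_of_lt (by omega)

lemma Bq_zero_left {k N : ℤ} (hN : 0 < N) : Bq k 0 N = 1 := by
  have h1 : IC (0 + N) 0 = 1 := by rw [IC, if_neg (by omega)]; simp
  have hN' : ((N : ℚ)) ≠ 0 := by
    exact_mod_cast (show (N : ℚ) ≠ 0 by exact_mod_cast (by omega : N ≠ 0))
  rw [Bq, h1]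
  push_cast
  field_simp
  ring

lemma Bq_num_zero {k M : ℤ} : Bq k M (k * M) = 0 := by
  simp [Bq]

lemma Bq_pascal (k : ℤ) (a b : ℕ) :
    Bq k ((a : ℤ) + 1) ((b : ℤ) + 1) = Bq k (a : ℤ) ((b : ℤ) + 1) + Bq k ((a : ℤ) + 1) (b : ℤ) := by
  have h1n : (a + b + 2) * (a + b + 1).choose a = (a + b + 2).choose (a + 1) * (a + 1) :=
    Nat.add_one_mul_choose_eq (a + b + 1) a
  have hsym1 : (a + b + 2).choose (a + 1) = (a + b + 2).choose (b + 1) := by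
    rw [← Nat.choose_symm (by omega : a + 1 ≤ a + b + 2)]
    congr 1
    omega
  have hsym2 : (a + b + 1).choose (a + 1) = (a + b + 1).choose b := by
    rw [← Nat.choose_symm (by omega : a + 1 ≤ a + b + 1)]
    congr 1
    omega
  have h2n : (a + b + 2) * (a + b + 1).choose (a + 1) = (a + b + 2).choose (a + 1) * (b + 1) := by
    rw [hsym2, hsym1]
    exact Nat.add_one_mul_choose_eq (a + b + 1) b
  have e0 : IC (((a : ℤ) + 1) + ((b : ℤ) + 1)) ((a : ℤ) + 1) = (a + b + 2).choose (a + 1) := by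
    rw [show ((a : ℤ) + 1) + ((b : ℤ) + 1) = ((a + b + 2 : ℕ) : ℤ) by push_cast; ring,
      show ((a : ℤ) + 1) = ((a + 1 : ℕ) : ℤ) by push_cast; ring, IC_coe]
  have e1 : IC ((a : ℤ) + ((b : ℤ) + 1)) (a : ℤ) = (a + b + 1).choose a := by
    rw [show (a : ℤ) + ((b : ℤ) + 1) = ((a + b + 1 : ℕ) : ℤ) by push_cast; ring, IC_coe]
  have e2 : IC (((a : ℤ) + 1) + (b : ℤ)) ((a : ℤ) + 1) = (a + b + 1).choose (a + 1) := by
    rw [show ((a : ℤ) + 1) + (b : ℤ) = ((a + b + 1 : ℕ) : ℤ) by push_cast; ring,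
      show ((a : ℤ) + 1) = ((a + 1 : ℕ) : ℤ) by push_cast; ring, IC_coe]
  have hD : ((a : ℚ) + b + 2) ≠ 0 := by positivity
  have hD1 : ((a : ℚ) + b + 1) ≠ 0 := by positivity
  have q1 : ((a + b + 1).choose a : ℚ) =
      ((a : ℚ) + 1) * ((a + b + 2).choose (a + 1) : ℚ) / ((a : ℚ) + b + 2) := by
    rw [eq_div_iff hD]
    have h := congrArg (Nat.cast : ℕ → ℚ) h1n
    push_cast at h
    linarith [h]
  have q2 : ((a + b + 1).choose (a + 1) : ℚ) =
      ((b : ℚ) + 1) * ((a + b + 2).choose (a + 1) : ℚ) / ((a : ℚ) + b + 2) := by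
    rw [eq_div_iff hD]
    have h := congrArg (Nat.cast : ℕ → ℚ) h2n
    push_cast at h
    linarith [h]
  unfold Bq
  rw [e0, e1, e2, q1, q2]
  push_cast
  field_simp
  ring

def lo (k d : ℤ) : ℕ := ((k * d - 1) / (k + 1) + 1).toNat

def Tt (k d : ℤ) (m n i : ℕ) : ℚ :=
  Bq k ((m : ℤ) - i) ((n : ℤ) - k * i + k * d) * (IC ((k + 1) * i - k * d) i : ℚ)

def G (k d : ℤ) (m n : ℕ) : ℚ :=
  ((m + n).choose m : ℚ) - ∑ i ∈ Finset.Icc (lo k d) m, Tt k d m n i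

lemma lo_pos {k d : ℤ} (hk : 1 ≤ k) (hd : 1 ≤ d) : 1 ≤ lo k d := by
  have hkd : 1 ≤ k * d := by nlinarith
  have h0 : 0 ≤ (k * d - 1) / (k + 1) := Int.ediv_nonneg (by omega) (by omega)
  unfold lo
  omega



lemma G_pascal {k d : ℤ} (hk : 1 ≤ k) (m n : ℕ)
    (hb : k * ((m : ℤ) + 1) - k * d < n) :
    G k d (m + 1) (n + 1) = G k d m (n + 1) + G k d (m + 1) n := by
  have hchoose : ((m + 1) + (n + 1)).choose (m + 1) =
      (m + (n + 1)).choose m + ((m + 1) + n).choose (m + 1) := by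
    rw [show (m + 1) + (n + 1) = (m + (n + 1)) + 1 by omega]
    rw [show (m + 1) + n = m + (n + 1) by omega]
    exact Nat.choose_succ_succ (m + (n + 1)) m
  by_cases hlo : lo k d ≤ m + 1
  · have hsum : ∑ i ∈ Finset.Icc (lo k d) (m + 1), Tt k d (m + 1) (n + 1) i =
        ∑ i ∈ Finset.Icc (lo k d) m, Tt k d m (n + 1) i +
        ∑ i ∈ Finset.Icc (lo k d) (m + 1), Tt k d (m + 1) n i := by
      rw [Finset.sum_Icc_succ_top hlo, Finset.sum_Icc_succ_top hlo]
      have htop : Tt k d (m + 1) (n + 1) (m + 1) = Tt k d (m + 1) n (m + 1) := by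
        unfold Tt
        rw [sub_self]
        rw [Bq_zero_left (by push_cast; push_cast at hb; linarith),
          Bq_zero_left (by push_cast; push_cast at hb; linarith)]
      rw [htop]
      have hmid : ∑ i ∈ Finset.Icc (lo k d) m, Tt k d (m + 1) (n + 1) i =
          ∑ i ∈ Finset.Icc (lo k d) m, (Tt k d m (n + 1) i + Tt k d (m + 1) n i) := by
        apply Finset.sum_congr rfl
        intro i hi
        have hi2 : i ≤ m := (Finset.mem_Icc.mp hi).2
        have hk0 : (0 : ℤ) ≤ k := by omega
        have hMnn : (0 : ℤ) ≤ k * ((m : ℤ) + 1 - i) :=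
          mul_nonneg hk0 (by push_cast; omega)
        have hring : k * ((m : ℤ) + 1 - i) = k * ((m : ℤ) + 1) - k * i := by ring
        have hb0 : 0 ≤ (n : ℤ) - k * i + k * d := by linarith
        set b : ℕ := ((n : ℤ) - k * i + k * d).toNat with hbdef
        have hbeq : ((b : ℤ)) = (n : ℤ) - k * i + k * d := Int.toNat_of_nonneg hb0
        have ha1 : ((m + 1 : ℕ) : ℤ) - (i : ℤ) = ((m - i : ℕ) : ℤ) + 1 := by omega
        have ha2 : ((m : ℕ) : ℤ) - (i : ℤ) = ((m - i : ℕ) : ℤ) := by omega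
        have hn1 : ((n + 1 : ℕ) : ℤ) - k * i + k * d = ((b : ℤ)) + 1 := by push_cast; linarith
        have hn2 : ((n : ℕ) : ℤ) - k * i + k * d = ((b : ℤ)) := by linarith
        unfold Tt
        rw [ha1, ha2, hn1, hn2, Bq_pascal k (m - i) b, add_mul]
      rw [hmid, Finset.sum_add_distrib]
      ring
    unfold G
    rw [hchoose, hsum]
    push_cast
    ring
  · have h1 : Finset.Icc (lo k d) (m + 1) = ∅ := Finset.Icc_eq_empty hlo
    have h2 : Finset.Icc (lo k d) m = ∅ := Finset.Icc_eq_empty (by omega)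
    unfold G
    rw [h1, h2, hchoose]
    simp

lemma G_boundary {k d : ℤ} (hk : 1 ≤ k) (hd : 1 ≤ d) (m n : ℕ)
    (hbe : (n : ℤ) = k * ((m : ℤ) + 1) - k * d) :
    G k d (m + 1) (n + 1) = G k d m (n + 1) := by
  have hkd : 1 ≤ k * d := by nlinarith
  have hlo : lo k d ≤ m + 1 := by
    have hdiv : (k * d - 1) / (k + 1) < (m : ℤ) + 1 := by
      rw [Int.ediv_lt_iff_lt_mul (by omega : (0 : ℤ) < k + 1)]
      nlinarith [hbe, Int.natCast_nonneg n]
    unfold lo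
    rw [Int.toNat_le]
    push_cast
    omega
  have hchoose : ((m + 1) + (n + 1)).choose (m + 1) =
      (m + (n + 1)).choose m + ((m + 1) + n).choose (m + 1) := by
    rw [show (m + 1) + (n + 1) = (m + (n + 1)) + 1 by omega]
    rw [show (m + 1) + n = m + (n + 1) by omega]
    exact Nat.choose_succ_succ (m + (n + 1)) m
  have hsum : ∑ i ∈ Finset.Icc (lo k d) (m + 1), Tt k d (m + 1) (n + 1) i =
      ∑ i ∈ Finset.Icc (lo k d) m, Tt k d m (n + 1) i + (((m + 1) + n).choose (m + 1) : ℚ) := by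
    rw [Finset.sum_Icc_succ_top hlo]
    have htop : Tt k d (m + 1) (n + 1) (m + 1) = (((m + 1) + n).choose (m + 1) : ℚ) := by
      unfold Tt
      rw [sub_self]
      rw [Bq_zero_left (by push_cast; linarith [hbe])]
      rw [show (k + 1) * ((m + 1 : ℕ) : ℤ) - k * d = (((m + 1) + n : ℕ) : ℤ) by
        push_cast; linarith [hbe]]
      rw [show ((m + 1 : ℕ) : ℤ) = (((m + 1 : ℕ) : ℕ) : ℤ) by push_cast; ring]
      rw [IC_coe]
      simp
    rw [htop]
    congr 1
    apply Finset.sum_congr rfl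
    intro i hi
    have hi2 : i ≤ m := (Finset.mem_Icc.mp hi).2
    have hk0 : (0 : ℤ) ≤ k := by omega
    have hMnn : (0 : ℤ) ≤ k * ((m : ℤ) + 1 - i) := mul_nonneg hk0 (by push_cast; omega)
    have hring : k * ((m : ℤ) + 1 - i) = k * ((m : ℤ) + 1) - k * i := by ring
    have hb0 : 0 ≤ (n : ℤ) - k * i + k * d := by linarith
    set b : ℕ := ((n : ℤ) - k * i + k * d).toNat with hbdef
    have hbeq : ((b : ℤ)) = (n : ℤ) - k * i + k * d := Int.toNat_of_nonneg hb0
    have ha1 : ((m + 1 : ℕ) : ℤ) - (i : ℤ) = ((m - i : ℕ) : ℤ) + 1 := by omega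
    have ha2 : ((m : ℕ) : ℤ) - (i : ℤ) = ((m - i : ℕ) : ℤ) := by omega
    have hn1 : ((n + 1 : ℕ) : ℤ) - k * i + k * d = ((b : ℤ)) + 1 := by push_cast; linarith
    have hbkM : ((b : ℤ)) = k * (((m - i : ℕ) : ℤ) + 1) := by
      rw [hbeq]
      have : ((m - i : ℕ) : ℤ) = (m : ℤ) - i := by omega
      rw [this]
      linarith [hbe, hring]
    unfold Tt
    rw [ha1, ha2, hn1, Bq_pascal k (m - i) b]
    rw [show Bq k (((m - i : ℕ) : ℤ) + 1) ((b : ℕ) : ℤ) = 0 by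
      rw [show ((b : ℕ) : ℤ) = k * (((m - i : ℕ) : ℤ) + 1) from hbkM]; exact Bq_num_zero]
    ring
  unfold G
  rw [hchoose, hsum]
  push_cast
  ring



lemma G_row_zero {k d : ℤ} (hk : 1 ≤ k) (hd : 1 ≤ d) (m : ℕ) (h : k * (m : ℤ) < k * d) :
    G k d m 0 = 1 := by
  unfold G
  rw [Finset.sum_eq_zero, Nat.add_zero, Nat.choose_self]
  · simp
  · intro i hi
    obtain ⟨hi1, hi2⟩ := Finset.mem_Icc.mp hi
    have hil : 1 ≤ i := le_trans (lo_pos hk hd) hi1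
    have hki : k * (i : ℤ) ≤ k * (m : ℤ) :=
      mul_le_mul_of_nonneg_left (by exact_mod_cast hi2) (by omega)
    have hicc : (k + 1) * (i : ℤ) - k * d < (i : ℤ) := by nlinarith
    unfold Tt
    rw [IC_zero_of_lt hil hicc]
    simp

lemma f_eq_G {k d : ℤ} (hk : 1 ≤ k) (hd : 1 ≤ d) :
    ∀ N m n : ℕ, m + n = N → k * (m : ℤ) - k * d < (n : ℤ) →
      (f k (k * d) m n : ℚ) = G k d m n := by
  have hkd : 1 ≤ k * d := by nlinarith
  intro N
  induction N with
  | zero =>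
    intro m n hmn _
    obtain ⟨rfl, rfl⟩ : m = 0 ∧ n = 0 := by omega
    have hf : f k (k * d) 0 0 = 1 := by simp only [f]; rw [if_pos (by omega)]
    rw [hf]
    unfold G
    rw [Finset.Icc_eq_empty (b := 0) (by have := lo_pos hk hd; omega), Finset.sum_empty]
    simp
  | succ N IH =>
    intro m n hmn hab
    rcases m with _ | m
    · rcases n with _ | n
      · omega
      · have hf : f k (k * d) 0 (n + 1) = f k (k * d) 0 n := by
          simp only [f]; rw [if_pos (by omega)]
        rw [hf, IH 0 n (by omega) (by push_cast; omega)]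
        unfold G
        rw [Finset.Icc_eq_empty (b := 0) (by have := lo_pos hk hd; omega)]
        simp
    · rcases n with _ | n
      · -- n = 0
        push_cast at hab
        have hstep : k * ((m : ℤ) + 1) = k * (m : ℤ) + k := by ring
        have hf : f k (k * d) (m + 1) 0 = f k (k * d) m 0 := by
          simp only [f]; rw [if_pos (by push_cast; linarith)]
        rw [hf, IH m 0 (by omega) (by push_cast; linarith)]
        rw [G_row_zero hk hd m (by linarith), G_row_zero hk hd (m + 1) (by push_cast; linarith)]
      · -- m, n ≥ 1
        push_cast at hab
        have hf : f k (k * d) (m + 1) (n + 1) =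
            f k (k * d) m (n + 1) + f k (k * d) (m + 1) n := by
          simp only [f]; rw [if_pos (by push_cast; linarith)]
        have hstep : k * ((m : ℤ) + 1) = k * (m : ℤ) + k := by ring
        by_cases hb : k * ((m : ℤ) + 1) - k * d < (n : ℤ)
        · rw [hf]
          push_cast [IH m (n + 1) (by omega) (by push_cast; linarith),
            IH (m + 1) n (by omega) (by push_cast; linarith)]
          exact (G_pascal hk m n hb).symm
        · have hbe : (n : ℤ) = k * ((m : ℤ) + 1) - k * d := by linarith
          have hf2 : f k (k * d) (m + 1) n = 0 :=
            f_below (by push_cast; linarith) (by omega)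
          rw [hf, hf2, Nat.add_zero, IH m (n + 1) (by omega) (by push_cast; linarith)]
          exact (G_boundary hk hd m n hbe).symm

end Stmt18

theorem stmt18 (m n k d : ℤ) (hm : 1 ≤ m) (hn : 1 ≤ n) (hk : 1 ≤ k) (hd : 1 ≤ d)
    (h1 : k * (m - d) ≤ n) (h2 : k * m < n + k * d) :
    (NS k (k * d) 0 0 m n : ℚ) =
      (IC (m + n) m : ℚ) -
        ∑ i ∈ Finset.Icc ((((k * d - 1) / (k + 1)) + 1).toNat) m.toNat,
          (((n + k * d - k * m : ℤ) : ℚ) / ((m + n + k * d - (k + 1) * (i : ℤ) : ℤ) : ℚ)) *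
            (IC (m + n + k * d - (k + 1) * (i : ℤ)) (m - (i : ℤ)) : ℚ) *
            (IC ((k + 1) * (i : ℤ) - k * d) (i : ℤ) : ℚ) := by
  obtain ⟨M, rfl⟩ : ∃ M : ℕ, m = (M : ℤ) := ⟨m.toNat, (Int.toNat_of_nonneg (by omega)).symm⟩
  obtain ⟨Nn, rfl⟩ : ∃ Nn : ℕ, n = (Nn : ℤ) := ⟨n.toNat, (Int.toNat_of_nonneg (by omega)).symm⟩
  have hkd : 1 ≤ k * d := by nlinarith
  rw [Stmt18.NS_eq_f (by omega) (by omega) (by omega)]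
  rw [Int.toNat_natCast, Int.toNat_natCast]
  rw [Stmt18.f_eq_G hk hd (M + Nn) M Nn rfl (by linarith)]
  have hIC : (IC ((M : ℤ) + (Nn : ℤ)) (M : ℤ) : ℚ) = (((M + Nn).choose M : ℕ) : ℚ) := by
    rw [show ((M : ℤ)) + (Nn : ℤ) = ((M + Nn : ℕ) : ℤ) by push_cast; ring, Stmt18.IC_coe]
  rw [hIC]
  unfold Stmt18.G Stmt18.Tt Stmt18.Bq Stmt18.lo
  congr 1
  apply Finset.sum_congr rfl
  intro i _
  rw [show ((Nn : ℤ) - k * i + k * d) - k * ((M : ℤ) - i) = (Nn : ℤ) + k * d - k * M by ring,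
    show ((M : ℤ) - i) + ((Nn : ℤ) - k * i + k * d)
      = (M : ℤ) + (Nn : ℤ) + k * d - (k + 1) * i by ring]
end
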